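/- Let q be a power of an odd prime, let n be an odd integer with 1 ≤ n ≤ q, set k = (n+1)/2, and let a_1, …, a_n be distinct elements of F_q with S = {a_1, …, a_n}. Then there exist nonzero elements v_1, …, v_n of F_q such that the extended generalized Reed–Solomon code C_egrs(S, v, q) = {(v_1 f(a_1), …, v_n f(a_n), f_{k−1}) : f ∈ F_q[x], deg f ≤ k − 1} ⊆ F_q^{n+1}, where f_{k−1} denotes the coefficient of x^{k−1} in f, is self-dual if and only if η_q(−Δ_S(a)) = 1 for all a ∈ S. -/

import Mathlib

open Finset Polynomial

section Aux
variable {F : Type*} [Field F]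

lemma basis_coeff {n : ℕ} (a : Fin n → F) (ha : Function.Injective a) (i : Fin n) :
    (Lagrange.basis Finset.univ a i).coeff (n - 1) =
      (∏ j ∈ Finset.univ.erase i, (a i - a j))⁻¹ := by
  have hinj : Set.InjOn a ↑(Finset.univ : Finset (Fin n)) := fun x _ y _ hxy => ha hxy
  have hnd : (Lagrange.basis Finset.univ a i).natDegree = n - 1 := by
    rw [Lagrange.natDegree_basis hinj (mem_univ i)]; simp
  rw [← hnd, coeff_natDegree]
  rw [show Lagrange.basis Finset.univ a i
      = ∏ j ∈ Finset.univ.erase i, Lagrange.basisDivisor (a i) (a j) from rfl,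
    leadingCoeff_prod, ← Finset.prod_inv_distrib]
  refine Finset.prod_congr rfl fun j hj => ?_
  rw [Lagrange.basisDivisor, leadingCoeff_mul, leadingCoeff_C, leadingCoeff_X_sub_C, mul_one]

lemma coeff_eq_sum_eval {n : ℕ} (a : Fin n → F) (ha : Function.Injective a)
    (h : F[X]) (hd : h.degree < (n : ℕ)) :
    h.coeff (n - 1) = ∑ i, h.eval (a i) * (∏ j ∈ Finset.univ.erase i, (a i - a j))⁻¹ := by
  have hinj : Set.InjOn a ↑(Finset.univ : Finset (Fin n)) := fun x _ y _ hxy => ha hxy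
  have hcard : #(Finset.univ : Finset (Fin n)) = n := by simp
  have heq := Lagrange.eq_interpolate hinj (f := h) (by rwa [hcard])
  conv_lhs => rw [heq]
  rw [Lagrange.interpolate_apply, finset_sum_coeff]
  refine Finset.sum_congr rfl fun i _ => ?_
  rw [coeff_C_mul, basis_coeff a ha i]

lemma coeff_mul_top {k : ℕ} (hk : 1 ≤ k) (f g : F[X])
    (hf : f.degree < (k : ℕ)) (hg : g.degree < (k : ℕ)) :
    (f * g).coeff (2 * k - 2) = f.coeff (k - 1) * g.coeff (k - 1) := by
  rw [coeff_mul, Finset.sum_eq_single (k - 1, k - 1)]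
  · intro b hmem hne
    rw [Finset.HasAntidiagonal.mem_antidiagonal] at hmem
    by_cases h1 : k ≤ b.1
    · rw [coeff_eq_zero_of_degree_lt (hf.trans_le (by exact_mod_cast Nat.cast_le.mpr h1)),
        zero_mul]
    · have hx : ¬(b.1 = k - 1 ∧ b.2 = k - 1) := fun ⟨e1, e2⟩ => hne (Prod.ext e1 e2)
      have h2 : k ≤ b.2 := by omega
      rw [coeff_eq_zero_of_degree_lt (hg.trans_le (by exact_mod_cast Nat.cast_le.mpr h2)),
        mul_zero]
  · intro hnot
    exact absurd (Finset.HasAntidiagonal.mem_antidiagonal.mpr (by omega)) hnot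

lemma pairing {n k : ℕ} (hn : 1 ≤ n) (hk : n + 1 = 2 * k)
    (a : Fin n → F) (ha : Function.Injective a) (v : Fin n → F)
    (hv : ∀ i, v i * v i = -(∏ j ∈ Finset.univ.erase i, (a i - a j))⁻¹)
    (f g : F[X]) (hf : f.degree < (k : ℕ)) (hg : g.degree < (k : ℕ)) :
    ∑ i : Fin n, (v i * f.eval (a i)) * (v i * g.eval (a i))
      + f.coeff (k - 1) * g.coeff (k - 1) = 0 := by
  have hk1 : 1 ≤ k := by omega
  rcases eq_or_ne f 0 with rfl | hf0
  · simp
  rcases eq_or_ne g 0 with rfl | hg0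
  · simp
  have hfg : (f * g).degree < (n : ℕ) := by
    rw [degree_eq_natDegree (mul_ne_zero hf0 hg0), natDegree_mul hf0 hg0, Nat.cast_lt]
    have h1 : f.natDegree < k := (natDegree_lt_iff_degree_lt hf0).mpr hf
    have h2 : g.natDegree < k := (natDegree_lt_iff_degree_lt hg0).mpr hg
    omega
  have key := coeff_eq_sum_eval a ha (f * g) hfg
  have h21 : n - 1 = 2 * k - 2 := by omega
  rw [h21, coeff_mul_top hk1 f g hf hg] at key
  have : ∑ i : Fin n, (v i * f.eval (a i)) * (v i * g.eval (a i))
      = -(f.coeff (k - 1) * g.coeff (k - 1)) := by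
    rw [key, ← Finset.sum_neg_distrib]
    refine Finset.sum_congr rfl fun i _ => ?_
    rw [eval_mul]
    rw [show v i * f.eval (a i) * (v i * g.eval (a i))
        = f.eval (a i) * g.eval (a i) * (v i * v i) by ring, hv i]
    ring
  rw [this]; ring

end Aux


/-- The extended generalized Reed–Solomon code
C_egrs(S,v,q) = {(v₁ f(a₁), …, vₙ f(aₙ), f_{k−1}) : f ∈ F_q[x], deg f ≤ k − 1},
where f_{k−1} is the coefficient of x^{k−1} in f. -/
def egrsCode {F : Type*} [Field F] {n : ℕ} (a v : Fin n → F) (k : ℕ) : Set (Fin (n + 1) → F) :=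
  {c | ∃ f : Polynomial F, f.degree < (k : ℕ) ∧
    c = Fin.snoc (fun i => v i * f.eval (a i)) (f.coeff (k - 1))}

/-- The dual of a code C ⊆ F_q^n with respect to the standard inner product. -/
def dualSet {F : Type*} [Field F] {n : ℕ} (C : Set (Fin n → F)) : Set (Fin n → F) :=
  {w | ∀ c ∈ C, ∑ i, w i * c i = 0}

theorem stmt_1 (p m : ℕ) (hp : p.Prime) (hodd : p ≠ 2) (hm : 0 < m)
    (F : Type*) [Field F] [Fintype F] [DecidableEq F] (hF : Fintype.card F = p ^ m)
    (n : ℕ) (hn1 : 1 ≤ n) (hnq : n ≤ p ^ m) (hne : Odd n)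
    (a : Fin n → F) (ha : Function.Injective a) :
    (∃ v : Fin n → F, (∀ i, v i ≠ 0) ∧
        egrsCode a v ((n + 1) / 2) = dualSet (egrsCode a v ((n + 1) / 2))) ↔
      (∀ i : Fin n, IsSquare (-(∏ j ∈ Finset.univ.erase i, (a i - a j)))) := by
  obtain ⟨m', hm'⟩ := hne
  set k := (n + 1) / 2 with hkdef
  have hk : n + 1 = 2 * k := by rw [hkdef]; omega
  have hk1 : 1 ≤ k := by omega
  have hkn : k ≤ n := by omega
  constructor
  · rintro ⟨v, hv, hC⟩ i
    have hcer : #(Finset.univ.erase i) = n - 1 := by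
      rw [Finset.card_erase_of_mem (mem_univ i)]; simp
    obtain ⟨T, hTsub, hTcard⟩ :=
      Finset.exists_subset_card_eq (show k - 1 ≤ #(Finset.univ.erase i) by omega)
    set f : F[X] := ∏ j ∈ T, (X - C (a j)) with hfdef
    set g : F[X] := ∏ j ∈ (Finset.univ.erase i) \ T, (X - C (a j)) with hgdef
    have hfm : f.Monic := monic_prod_of_monic _ _ fun j _ => monic_X_sub_C (a j)
    have hgm : g.Monic := monic_prod_of_monic _ _ fun j _ => monic_X_sub_C (a j)
    have hgcard : #((Finset.univ.erase i) \ T) = k - 1 := by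
      rw [Finset.card_sdiff_of_subset hTsub, hcer, hTcard]; omega
    have hfnd : f.natDegree = k - 1 := by
      rw [hfdef, natDegree_prod _ _ (fun j _ => X_sub_C_ne_zero (a j))]
      simp [natDegree_X_sub_C, hTcard]
    have hgnd : g.natDegree = k - 1 := by
      rw [hgdef, natDegree_prod _ _ (fun j _ => X_sub_C_ne_zero (a j))]
      simp [natDegree_X_sub_C, hgcard]
    have hfd : f.degree < (k : ℕ) := by
      rw [degree_eq_natDegree hfm.ne_zero, hfnd, Nat.cast_lt]; omega
    have hgd : g.degree < (k : ℕ) := by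
      rw [degree_eq_natDegree hgm.ne_zero, hgnd, Nat.cast_lt]; omega
    have hfc : f.coeff (k - 1) = 1 := by rw [← hfnd]; exact hfm.coeff_natDegree
    have hgc : g.coeff (k - 1) = 1 := by rw [← hgnd]; exact hgm.coeff_natDegree
    have hcf : (Fin.snoc (fun i' => v i' * f.eval (a i')) (f.coeff (k - 1)) :
        Fin (n+1) → F) ∈ egrsCode a v k := ⟨f, hfd, rfl⟩
    have hcg : (Fin.snoc (fun i' => v i' * g.eval (a i')) (g.coeff (k - 1)) :
        Fin (n+1) → F) ∈ egrsCode a v k := ⟨g, hgd, rfl⟩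
    rw [hC] at hcf
    have hsum := hcf _ hcg
    rw [Fin.sum_univ_castSucc] at hsum
    simp only [Fin.snoc_castSucc, Fin.snoc_last, hfc, hgc, mul_one] at hsum
    have hred : ∑ i' : Fin n, (v i' * f.eval (a i')) * (v i' * g.eval (a i'))
        = v i * v i * ∏ j ∈ Finset.univ.erase i, (a i - a j) := by
      rw [Finset.sum_eq_single i]
      · have hprod : (∏ j ∈ T, (a i - a j)) * (∏ j ∈ (Finset.univ.erase i) \ T, (a i - a j))
            = ∏ j ∈ Finset.univ.erase i, (a i - a j) := by
          rw [← Finset.prod_union Finset.disjoint_sdiff, Finset.union_sdiff_of_subset hTsub]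
        rw [hfdef, hgdef]
        simp only [eval_prod, eval_sub, eval_X, eval_C]
        rw [← hprod]; ring
      · intro j _ hji
        by_cases hjT : j ∈ T
        · have hz : f.eval (a j) = 0 := by
            rw [hfdef, eval_prod]
            exact Finset.prod_eq_zero hjT (by simp)
          rw [hz]; ring
        · have hj2 : j ∈ (Finset.univ.erase i) \ T :=
            Finset.mem_sdiff.mpr ⟨Finset.mem_erase.mpr ⟨hji, mem_univ j⟩, hjT⟩
          have hz : g.eval (a j) = 0 := by
            rw [hgdef, eval_prod]
            exact Finset.prod_eq_zero hj2 (by simp)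
          rw [hz]; ring
      · intro h; exact absurd (mem_univ i) h
    rw [hred] at hsum
    refine ⟨(v i)⁻¹, ?_⟩
    have hvi := hv i
    field_simp
    linear_combination -hsum
  · intro hsq
    have hΔ : ∀ i : Fin n, (∏ j ∈ Finset.univ.erase i, (a i - a j)) ≠ 0 := fun i =>
      Finset.prod_ne_zero_iff.mpr fun j hj =>
        sub_ne_zero_of_ne fun h => (Finset.mem_erase.mp hj).1 (ha h).symm
    choose r hr using hsq
    have hrne : ∀ i, r i ≠ 0 := fun i h0 =>
      hΔ i (neg_eq_zero.mp (by rw [hr i, h0, mul_zero]))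
    set v : Fin n → F := fun i => (r i)⁻¹ with hvdef
    have hv : ∀ i, v i * v i = -(∏ j ∈ Finset.univ.erase i, (a i - a j))⁻¹ := by
      intro i
      rw [hvdef]
      simp only
      rw [← mul_inv, ← hr i, inv_neg]
    refine ⟨v, fun i => inv_ne_zero (hrne i), ?_⟩
    -- bilinear form
    set B : LinearMap.BilinForm F (Fin (n + 1) → F) := LinearMap.mk₂ F
        (fun x y => ∑ j, x j * y j)
        (fun x x' y => by simp [add_mul, Finset.sum_add_distrib])
        (fun c x y => by simp [Finset.mul_sum, mul_assoc])
        (fun x y y' => by simp [mul_add, Finset.sum_add_distrib])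
        (fun c x y => by simp [Finset.mul_sum, mul_left_comm, mul_comm, mul_assoc])
      with hBdef
    have hBapp : ∀ x y : Fin (n + 1) → F, B x y = ∑ j, x j * y j := fun _ _ => rfl
    have hrefl : B.IsRefl := by
      intro x y h
      rw [hBapp] at h ⊢
      rw [show ∑ j, y j * x j = ∑ j, x j * y j from
        Finset.sum_congr rfl fun j _ => mul_comm _ _]
      exact h
    have hnd : B.Nondegenerate := by
      refine (LinearMap.IsRefl.nondegenerate_iff_separatingLeft hrefl).mpr ?_
      intro x hx
      funext j
      have := hx (Pi.single j 1)
      rw [hBapp] at this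
      simpa [Pi.single_apply, Finset.sum_ite_eq'] using this
    -- linear map
    set φL : Fin (n + 1) → (F[X] →ₗ[F] F) :=
      Fin.snoc (fun i => v i • Polynomial.leval (a i)) (lcoeff F (k - 1)) with hφLdef
    set φ : F[X] →ₗ[F] (Fin (n + 1) → F) := LinearMap.pi φL with hφdef
    have hφ : ∀ f : F[X],
        φ f = Fin.snoc (fun i => v i * f.eval (a i)) (f.coeff (k - 1)) := by
      intro f
      funext j
      refine Fin.lastCases ?_ (fun i => ?_) j
      · simp [hφdef, hφLdef, LinearMap.pi_apply, Fin.snoc_last, lcoeff_apply]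
      · simp [hφdef, hφLdef, LinearMap.pi_apply, Fin.snoc_castSucc, Polynomial.leval,
          smul_eq_mul]
    set W : Submodule F (Fin (n + 1) → F) := Submodule.map φ (degreeLT F k) with hWdef
    have hWmem : ∀ c, c ∈ W ↔ ∃ f : F[X], f.degree < (k : ℕ) ∧
        c = Fin.snoc (fun i => v i * f.eval (a i)) (f.coeff (k - 1)) := by
      intro c
      constructor
      · rintro ⟨f, hf, rfl⟩
        exact ⟨f, mem_degreeLT.mp hf, hφ f⟩
      · rintro ⟨f, hf, rfl⟩
        exact ⟨f, mem_degreeLT.mpr hf, hφ f⟩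
    have hCW : egrsCode a v k = ↑W := by
      ext c
      rw [SetLike.mem_coe, hWmem c]
      exact Iff.rfl
    have hdual : dualSet (↑W : Set (Fin (n + 1) → F)) = ↑(B.orthogonal W) := by
      ext w
      constructor
      · intro hw c hc
        have := hw c hc
        show B c w = 0
        rw [hBapp]
        simpa [mul_comm] using this
      · intro hw c hc
        have h2 : B c w = 0 := hw c hc
        rw [hBapp] at h2
        simpa [mul_comm] using h2
    have hWle : W ≤ B.orthogonal W := by
      intro c hc
      rw [LinearMap.BilinForm.mem_orthogonal_iff]
      intro u hu
      obtain ⟨f, hfd, rfl⟩ := (hWmem c).mp hc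
      obtain ⟨g, hgd, rfl⟩ := (hWmem u).mp hu
      show B _ _ = 0
      rw [hBapp, Fin.sum_univ_castSucc]
      simp only [Fin.snoc_castSucc, Fin.snoc_last]
      exact pairing hn1 hk a ha v hv g f hgd hfd
    have hfinV : Module.finrank F (Fin (n + 1) → F) = n + 1 := Module.finrank_fin_fun F
    have hinj : Function.Injective (φ.comp (degreeLT F k).subtype) := by
      rw [← LinearMap.ker_eq_bot]
      refine (Submodule.eq_bot_iff _).mpr fun x hx => ?_
      rw [LinearMap.mem_ker, LinearMap.comp_apply, Submodule.subtype_apply, hφ] at hx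
      have heval : ∀ i : Fin n, (x : F[X]).eval (a i) = 0 := by
        intro i
        have h1 := congrFun hx (Fin.castSucc i)
        rw [Fin.snoc_castSucc] at h1
        have h2 : v i * (x : F[X]).eval (a i) = 0 := h1
        rcases mul_eq_zero.mp h2 with h | h
        · exact absurd h (inv_ne_zero (hrne i))
        · exact h
      have hfe : (x : F[X]) = 0 := by
        rcases eq_or_ne (x : F[X]) 0 with h | h
        · exact h
        · refine eq_zero_of_natDegree_lt_card_of_eval_eq_zero _ ha heval ?_
          have hlt : (x : F[X]).natDegree < k :=
            (natDegree_lt_iff_degree_lt h).mpr (mem_degreeLT.mp x.2)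
          rw [Fintype.card_fin]; omega
      exact Subtype.ext hfe
    have hrange : LinearMap.range (φ.comp (degreeLT F k).subtype) = W := by
      rw [LinearMap.range_comp, Submodule.range_subtype]
    have hfinW : Module.finrank F W = k := by
      rw [← hrange, LinearMap.finrank_range_of_inj hinj]
      exact ((Polynomial.degreeLTEquiv F k).finrank_eq).trans (Module.finrank_fin_fun F)
    have horth : Module.finrank F (B.orthogonal W) = k := by
      rw [LinearMap.BilinForm.finrank_orthogonal hnd W, hfinW, hfinV]; omega
    have hWeq : W = B.orthogonal W :=
      Submodule.eq_of_le_of_finrank_le hWle (by rw [horth, hfinW])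
    rw [hCW, hdual, ← hWeq]
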